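/- Let K = ℚ(θ^{1/n}) with n > 2k, q a positive integer, and let χ be a primitive character of (ℤ[θ^{1/n}]/qℤ[θ^{1/n}])^×. Then |Σ_{a ∈ [1,q]^{n−k}} χ(Σ_{i=1}^{n−k} a_i θ^{(i−1)/n})| ≤ q^n / φ_K((q))^{1/2} ≤ q^{n/2 + o(1)}; in particular this sum is o(q^{n−k}) as q → ∞. -/

import Mathlib

set_option linter.unusedSectionVars false
set_option linter.unusedVariables false



/-- The ring `ℤ[θ^{1/n}]/q ≅ (ℤ/q)[x]/(x^n - θ)`. -/
abbrev Rq (n q : ℕ) (θ : ℤ) : Type :=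
  AdjoinRoot ((Polynomial.X : Polynomial (ZMod q)) ^ n - Polynomial.C ((θ : ZMod q)))

/-- The image of `θ^{1/n}` in `Rq n q θ`. -/
noncomputable def rootq (n q : ℕ) (θ : ℤ) : Rq n q θ :=
  AdjoinRoot.root ((Polynomial.X : Polynomial (ZMod q)) ^ n - Polynomial.C ((θ : ZMod q)))

open Polynomial

namespace Stmt13

variable {n q : ℕ} {θ : ℤ}

/-- The defining polynomial. -/
noncomputable abbrev fp (n q : ℕ) (θ : ℤ) : Polynomial (ZMod q) :=
  (Polynomial.X : Polynomial (ZMod q)) ^ n - Polynomial.C ((θ : ZMod q))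

lemma fp_monic (hn : n ≠ 0) : (fp n q θ).Monic := monic_X_pow_sub_C _ hn

lemma fp_natDegree [Nontrivial (ZMod q)] : (fp n q θ).natDegree = n :=
  natDegree_X_pow_sub_C

lemma fp_degree [Nontrivial (ZMod q)] (hn : 0 < n) : (fp n q θ).degree = n :=
  degree_X_pow_sub_C hn _

/-- modByMonic representative. -/
noncomputable def mo (hn : n ≠ 0) : Rq n q θ →ₗ[ZMod q] Polynomial (ZMod q) :=
  AdjoinRoot.modByMonicHom (fp_monic hn)

lemma mo_mk (hn : n ≠ 0) (p : Polynomial (ZMod q)) :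
    mo hn (AdjoinRoot.mk (fp n q θ) p) = p %ₘ fp n q θ :=
  AdjoinRoot.modByMonicHom_mk _ p

lemma mk_mo (hn : n ≠ 0) (x : Rq n q θ) : AdjoinRoot.mk (fp n q θ) (mo hn x) = x :=
  AdjoinRoot.mk_leftInverse (fp_monic hn) x

lemma mo_injective (hn : n ≠ 0) : Function.Injective (mo (θ := θ) (q := q) hn) :=
  Function.LeftInverse.injective (mk_mo hn)

lemma mo_degree_lt [Nontrivial (ZMod q)] (hn : n ≠ 0) (x : Rq n q θ) :
    (mo hn x).degree < n := by
  obtain ⟨p, rfl⟩ := AdjoinRoot.mk_surjective x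
  rw [mo_mk]
  simpa [fp_degree (Nat.pos_of_ne_zero hn)] using
    degree_modByMonic_lt p (fp_monic (θ := θ) hn)

/-- coefficients of the canonical representative -/
noncomputable def co (hn : n ≠ 0) (x : Rq n q θ) (j : ℕ) : ZMod q := (mo hn x).coeff j

lemma co_eq_zero [Nontrivial (ZMod q)] (hn : n ≠ 0) (x : Rq n q θ) {j : ℕ} (hj : n ≤ j) :
    co hn x j = 0 :=
  coeff_eq_zero_of_degree_lt ((mo_degree_lt hn x).trans_le (by exact_mod_cast Nat.cast_le.2 hj))

/-- The key shift identity: multiplying by the root shifts coefficients (away from wraparound). -/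
lemma co_root_mul [Nontrivial (ZMod q)] (hn : n ≠ 0) (x : Rq n q θ) {j : ℕ}
    (hj : j + 2 ≤ n) :
    co hn (rootq n q θ * x) (j + 1) = co hn x j := by
  set p := mo hn x with hp
  have hdeg : p.degree < n := mo_degree_lt hn x
  have hx : AdjoinRoot.mk (fp n q θ) p = x := mk_mo hn x
  have hroot : rootq n q θ * x = AdjoinRoot.mk (fp n q θ) (X * p) := by
    rw [map_mul, hx, AdjoinRoot.mk_X]; rfl
  have key : (X * p) %ₘ fp n q θ = X * p - C (p.coeff (n - 1)) * fp n q θ := by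
    refine (div_modByMonic_unique (C (p.coeff (n-1))) _ (fp_monic hn) ⟨by ring, ?_⟩).2
    rw [fp_degree (Nat.pos_of_ne_zero hn)]
    rw [degree_lt_iff_coeff_zero]
    intro m hm
    have hm' : (n : ℕ) ≤ m := by exact_mod_cast hm
    have h1 : (X * p).coeff m = p.coeff (m - 1) := by
      rcases Nat.exists_eq_add_of_le hm' with ⟨c, rfl⟩
      have : n + c = (n + c - 1) + 1 := by omega
      rw [this, coeff_X_mul]
      congr 1
    have h2 : (fp n q θ).coeff m = if m = n then 1 else 0 := by
      simp only [fp, coeff_sub, coeff_X_pow, coeff_C]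
      have : ¬ m = 0 := by omega
      rw [if_neg this, sub_zero]
    rw [coeff_sub, coeff_C_mul, h1, h2]
    rcases eq_or_lt_of_le hm' with h | h
    · rw [if_pos h.symm, mul_one, sub_eq_zero]
      congr 1
      omega
    · have hpm : p.coeff (m - 1) = 0 := by
        apply coeff_eq_zero_of_degree_lt
        refine hdeg.trans_le ?_
        exact_mod_cast Nat.cast_le.2 (Nat.le_sub_one_of_lt h)
      rw [if_neg (by omega), mul_zero, hpm, sub_zero]
  have : co hn (rootq n q θ * x) (j+1) = ((X * p) %ₘ fp n q θ).coeff (j+1) := by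
    rw [co, hroot, mo_mk]
  rw [this, key, coeff_sub, coeff_X_mul, coeff_C_mul]
  have h2 : (fp n q θ).coeff (j+1) = 0 := by
    simp only [fp, coeff_sub, coeff_X_pow, coeff_C]
    rw [if_neg (by omega), if_neg (by omega), sub_zero]
  rw [h2, mul_zero, sub_zero]
  rfl


/-- additive characters turn sums into products -/
lemma addChar_map_sum {A M : Type*} [AddCommMonoid A] [CommMonoid M] (ψ : AddChar A M)
    {ι : Type*} (s : Finset ι) (v : ι → A) :
    ψ (∑ i ∈ s, v i) = ∏ i ∈ s, ψ (v i) := by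
  classical
  induction s using Finset.induction_on with
  | empty => simp
  | insert _ _ h ih => rw [Finset.sum_insert h, Finset.prod_insert h, AddChar.map_add_eq_mul, ih]

lemma stdAddChar_conj {N : ℕ} [NeZero N] (a : ZMod N) :
    (starRingEnd ℂ) (ZMod.stdAddChar a) = ZMod.stdAddChar (-a) := by
  rw [ZMod.stdAddChar_apply, ZMod.stdAddChar_apply, ← Circle.coe_inv_eq_conj,
    ← AddChar.map_neg_eq_inv]

/-- The top-coefficient functional. -/
noncomputable def T (hn : n ≠ 0) : Rq n q θ →ₗ[ZMod q] ZMod q :=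
  (Polynomial.lcoeff (ZMod q) (n - 1)).comp (mo hn)

lemma T_apply (hn : n ≠ 0) (x : Rq n q θ) : T hn x = co hn x (n - 1) := rfl

lemma T_rootpow [Nontrivial (ZMod q)] (hn : n ≠ 0) (x : Rq n q θ) {m : ℕ} (hm : m ≤ n - 1) :
    T hn (rootq n q θ ^ m * x) = co hn x (n - 1 - m) := by
  induction m generalizing x with
  | zero => rw [pow_zero, one_mul, Nat.sub_zero, T_apply]
  | succ m ih =>
      have hm' : m ≤ n - 1 := by omega
      have h1 : rootq n q θ ^ (m + 1) * x = rootq n q θ ^ m * (rootq n q θ * x) := by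
        rw [pow_succ, mul_assoc]
      rw [h1, ih _ hm']
      have h2 : n - 1 - m = (n - 2 - m) + 1 := by omega
      rw [h2, co_root_mul hn x (by omega)]
      congr 1
      omega

lemma exists_T_ne_zero [Nontrivial (ZMod q)] (hn : n ≠ 0) {x : Rq n q θ} (hx : x ≠ 0) :
    ∃ y : Rq n q θ, T hn (y * x) ≠ 0 := by
  have hp : mo hn x ≠ 0 := fun h => hx (mo_injective hn (by rw [h, map_zero]))
  have hci : co hn x (mo hn x).natDegree ≠ 0 := Polynomial.leadingCoeff_ne_zero.2 hp
  have hi : (mo hn x).natDegree ≤ n - 1 := by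
    have := (Polynomial.natDegree_lt_iff_degree_lt hp).2 (mo_degree_lt hn x)
    omega
  refine ⟨rootq n q θ ^ (n - 1 - (mo hn x).natDegree), ?_⟩
  rw [T_rootpow hn x (Nat.sub_le _ _)]
  have h3 : n - 1 - (n - 1 - (mo hn x).natDegree) = (mo hn x).natDegree := by omega
  rw [h3]
  exact hci

/-- The standard additive character of `Rq`. -/
noncomputable def psiR (hn : n ≠ 0) [NeZero q] : AddChar (Rq n q θ) ℂ :=
  (ZMod.stdAddChar).compAddMonoidHom (T (θ := θ) hn).toAddMonoidHom

lemma psiR_apply (hn : n ≠ 0) [NeZero q] (x : Rq n q θ) :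
    psiR hn x = ZMod.stdAddChar (T hn x) := rfl

lemma psiR_conj (hn : n ≠ 0) [NeZero q] (x : Rq n q θ) :
    (starRingEnd ℂ) (psiR hn x) = psiR hn (-x) := by
  rw [psiR_apply, psiR_apply, stdAddChar_conj,
    show (T (θ := θ) hn) (-x) = -(T hn x) from map_neg _ _]

lemma exists_psiR_ne_one [Nontrivial (ZMod q)] [NeZero q] (hn : n ≠ 0) {x : Rq n q θ}
    (hx : x ≠ 0) : ∃ y : Rq n q θ, psiR hn (y * x) ≠ 1 := by
  obtain ⟨y, hy⟩ := exists_T_ne_zero hn hx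
  refine ⟨y, fun h => hy ?_⟩
  rw [psiR_apply] at h
  have := ZMod.injective_stdAddChar (h.trans (ZMod.stdAddChar (N := q)).map_zero_eq_one.symm)
  exact this

lemma sum_psiR [Nontrivial (ZMod q)] [NeZero q] [Fintype (Rq n q θ)] (hn : n ≠ 0)
    (d : Rq n q θ) :
    ∑ y : Rq n q θ, psiR hn (y * d) =
      if d = 0 then (Fintype.card (Rq n q θ) : ℂ) else 0 := by
  split_ifs with h
  · subst h
    simp [AddChar.map_zero_eq_one]
  · obtain ⟨y0, hy0⟩ := exists_psiR_ne_one hn h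
    have hne : (psiR (θ := θ) hn).compAddMonoidHom (AddMonoidHom.mulRight d) ≠ 1 :=
      AddChar.ne_one_iff.2 ⟨y0, hy0⟩
    simpa using AddChar.sum_eq_zero_of_ne_one hne


section Gauss

variable [NeZero q] [Nontrivial (ZMod q)] [Fintype (Rq n q θ)] [DecidableEq (Rq n q θ)]

/-- The Gauss sum at frequency `y`. -/
noncomputable def G (χ : MulChar (Rq n q θ) ℂ) (hn : n ≠ 0) (y : Rq n q θ) : ℂ :=
  ∑ x : Rq n q θ, χ x * psiR hn (y * x)

lemma chi_unit_abs (χ : MulChar (Rq n q θ) ℂ) (u : (Rq n q θ)ˣ) :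
    ‖χ (u : Rq n q θ)‖ = 1 := by
  have h : (χ (u : Rq n q θ)) ^ (orderOf u) = 1 := by
    rw [← map_pow, ← Units.val_pow_eq_pow_val, pow_orderOf_eq_one, Units.val_one, map_one]
  exact Complex.norm_eq_one_of_pow_eq_one h (orderOf_pos u).ne'

lemma G_unit (χ : MulChar (Rq n q θ) ℂ) (hn : n ≠ 0) (u : (Rq n q θ)ˣ) :
    G χ hn (u : Rq n q θ) = χ ((u⁻¹ : (Rq n q θ)ˣ) : Rq n q θ) * G χ hn 1 := by
  have h : χ ((u⁻¹ : (Rq n q θ)ˣ) : Rq n q θ) * G χ hn 1 = G χ hn (u : Rq n q θ) := by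
    simp only [G]
    rw [Finset.mul_sum]
    apply Fintype.sum_bijective _ (Units.mulLeft_bijective u⁻¹)
    intro w
    rw [one_mul, map_mul χ, ← mul_assoc ((u : Rq n q θ)), Units.mul_inv, one_mul]
    ring
  exact h.symm

lemma G_nonunit (χ : MulChar (Rq n q θ) ℂ) (hn : n ≠ 0)
    (hprim : ∀ I : Ideal (Rq n q θ), I ≠ ⊥ →
      ∃ u : (Rq n q θ)ˣ, ((u : Rq n q θ) - 1) ∈ I ∧ χ (u : Rq n q θ) ≠ 1)
    {y : Rq n q θ} (hy : ¬ IsUnit y) : G χ hn y = 0 := by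
  -- `y` is a zero divisor
  have hninj : ¬ Function.Injective (fun z : Rq n q θ => y * z) := by
    intro hinj
    obtain ⟨z, hz⟩ := (Finite.injective_iff_surjective.1 hinj) 1
    exact hy (IsUnit.of_mul_eq_one z hz)
  have hzd : ∃ z : Rq n q θ, z ≠ 0 ∧ y * z = 0 := by
    simp only [Function.Injective, not_forall] at hninj
    obtain ⟨a, b, hab, hne⟩ := hninj
    exact ⟨a - b, sub_ne_zero.2 hne, by rw [mul_sub, hab, sub_self]⟩
  obtain ⟨z, hz0, hyz⟩ := hzd
  obtain ⟨u, humem, hchi⟩ := hprim (Ideal.span {z})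
    (fun h => hz0 (Ideal.span_singleton_eq_bot.1 h))
  obtain ⟨w, hw⟩ := Ideal.mem_span_singleton'.1 humem
  have hyu : y * ((u : Rq n q θ) - 1) = 0 := by
    rw [← hw, show y * (w * z) = w * (y * z) by ring, hyz, mul_zero]
  have key : χ (u : Rq n q θ) * G χ hn y = G χ hn y := by
    simp only [G]
    rw [Finset.mul_sum]
    apply Fintype.sum_bijective _ (Units.mulLeft_bijective u)
    intro x
    rw [map_mul χ, show y * ((u : Rq n q θ) * x) = y * x + (y * ((u : Rq n q θ) - 1)) * x by ring,
      hyu, zero_mul, add_zero]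
    ring
  have h2 : (χ (u : Rq n q θ) - 1) * G χ hn y = 0 := by
    rw [sub_mul, one_mul, key, sub_self]
  rcases mul_eq_zero.1 h2 with h | h
  · exact absurd (sub_eq_zero.1 h) hchi
  · exact h


lemma G_plancherel (χ : MulChar (Rq n q θ) ℂ) (hn : n ≠ 0) :
    ∑ y : Rq n q θ, G χ hn y * (starRingEnd ℂ) (G χ hn y) =
      (Fintype.card (Rq n q θ) : ℂ) * ∑ x : Rq n q θ, χ x * (starRingEnd ℂ) (χ x) := by
  have conjG : ∀ y : Rq n q θ, (starRingEnd ℂ) (G χ hn y) =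
      ∑ z : Rq n q θ, (starRingEnd ℂ) (χ z) * psiR hn (-(y * z)) := by
    intro y
    simp only [G]
    rw [map_sum]
    refine Finset.sum_congr rfl fun z _ => ?_
    rw [map_mul, psiR_conj]
  calc ∑ y : Rq n q θ, G χ hn y * (starRingEnd ℂ) (G χ hn y)
      = ∑ y : Rq n q θ, ∑ x : Rq n q θ, ∑ z : Rq n q θ,
          χ x * (starRingEnd ℂ) (χ z) * psiR hn (y * (x - z)) := by
        refine Finset.sum_congr rfl fun y _ => ?_
        rw [conjG]
        simp only [G]
        rw [Finset.sum_mul_sum]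
        refine Finset.sum_congr rfl fun x _ => Finset.sum_congr rfl fun z _ => ?_
        rw [mul_mul_mul_comm]
        congr 1
        rw [← AddChar.map_add_eq_mul]
        congr 1
        ring
    _ = ∑ x : Rq n q θ, ∑ z : Rq n q θ,
          χ x * (starRingEnd ℂ) (χ z) * ∑ y : Rq n q θ, psiR hn (y * (x - z)) := by
        rw [Finset.sum_comm]
        refine Finset.sum_congr rfl fun x _ => ?_
        rw [Finset.sum_comm]
        refine Finset.sum_congr rfl fun z _ => ?_
        rw [Finset.mul_sum]
    _ = ∑ x : Rq n q θ, χ x * (starRingEnd ℂ) (χ x) * (Fintype.card (Rq n q θ) : ℂ) := by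
        refine Finset.sum_congr rfl fun x _ => ?_
        have h1 : ∀ z : Rq n q θ,
            χ x * (starRingEnd ℂ) (χ z) * ∑ y : Rq n q θ, psiR hn (y * (x - z)) =
            if z = x then χ x * (starRingEnd ℂ) (χ z) * (Fintype.card (Rq n q θ) : ℂ)
              else 0 := by
          intro z
          rw [sum_psiR hn (x - z)]
          by_cases h : z = x
          · rw [if_pos (by rw [h, sub_self]), if_pos h]
          · rw [if_neg (fun hh => h (sub_eq_zero.1 hh).symm), if_neg h, mul_zero]
        rw [Finset.sum_congr rfl (fun z _ => h1 z), Finset.sum_ite_eq' Finset.univ x]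
        rw [if_pos (Finset.mem_univ x)]
    _ = (Fintype.card (Rq n q θ) : ℂ) * ∑ x : Rq n q θ, χ x * (starRingEnd ℂ) (χ x) := by
        rw [Finset.mul_sum]
        exact Finset.sum_congr rfl fun x _ => mul_comm _ _

lemma sum_chi_normSq (χ : MulChar (Rq n q θ) ℂ) :
    ∑ x : Rq n q θ, χ x * (starRingEnd ℂ) (χ x) =
      ((Finset.univ.filter (fun x : Rq n q θ => IsUnit x)).card : ℂ) := by
  rw [← Finset.sum_filter_add_sum_filter_not Finset.univ (fun x : Rq n q θ => IsUnit x)]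
  have h1 : ∑ x ∈ Finset.univ.filter (fun x : Rq n q θ => IsUnit x),
      χ x * (starRingEnd ℂ) (χ x) =
      ((Finset.univ.filter (fun x : Rq n q θ => IsUnit x)).card : ℂ) := by
    rw [Finset.sum_congr rfl (fun x hx => ?_), Finset.sum_const, nsmul_eq_mul, mul_one]
    have hu : IsUnit x := (Finset.mem_filter.1 hx).2
    obtain ⟨u, rfl⟩ := hu
    rw [Complex.mul_conj]
    norm_cast
    rw [← Complex.sq_norm, chi_unit_abs χ u, one_pow]
  have h2 : ∑ x ∈ Finset.univ.filter (fun x : Rq n q θ => ¬ IsUnit x),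
      χ x * (starRingEnd ℂ) (χ x) = 0 := by
    refine Finset.sum_eq_zero fun x hx => ?_
    rw [χ.map_nonunit (Finset.mem_filter.1 hx).2, map_zero, mul_zero]
  rw [h1, h2, add_zero]

lemma G_abs_le (χ : MulChar (Rq n q θ) ℂ) (hn : n ≠ 0)
    (hprim : ∀ I : Ideal (Rq n q θ), I ≠ ⊥ →
      ∃ u : (Rq n q θ)ˣ, ((u : Rq n q θ) - 1) ∈ I ∧ χ (u : Rq n q θ) ≠ 1)
    (y : Rq n q θ) :
    ‖G χ hn y‖ ≤ Real.sqrt (Fintype.card (Rq n q θ)) := by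
  have habs1 : (‖G χ hn 1‖) ^ 2 ≤ (Fintype.card (Rq n q θ) : ℝ) := by
    -- Plancherel :  card_units * |G 1|² = card * card_units
    set m : ℕ := (Finset.univ.filter (fun x : Rq n q θ => IsUnit x)).card with hm
    have key : ∑ y : Rq n q θ, G χ hn y * (starRingEnd ℂ) (G χ hn y) =
        (Fintype.card (Rq n q θ) : ℂ) * m := by
      rw [G_plancherel χ hn, sum_chi_normSq χ]
    have hsplit : ∑ y : Rq n q θ, G χ hn y * (starRingEnd ℂ) (G χ hn y) =
        (m : ℂ) * ((‖G χ hn 1‖ : ℂ)) ^ 2 := by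
      rw [← Finset.sum_filter_add_sum_filter_not Finset.univ (fun x : Rq n q θ => IsUnit x)]
      have e2 : ∑ y ∈ Finset.univ.filter (fun x : Rq n q θ => ¬ IsUnit x),
          G χ hn y * (starRingEnd ℂ) (G χ hn y) = 0 := by
        refine Finset.sum_eq_zero fun y hy => ?_
        rw [G_nonunit χ hn hprim (Finset.mem_filter.1 hy).2, map_zero, mul_zero]
      have e1 : ∑ y ∈ Finset.univ.filter (fun x : Rq n q θ => IsUnit x),
          G χ hn y * (starRingEnd ℂ) (G χ hn y) =
          (m : ℂ) * ((‖G χ hn 1‖ : ℂ)) ^ 2 := by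
        rw [Finset.sum_congr rfl (fun y hy => ?_), Finset.sum_const, nsmul_eq_mul]
        obtain ⟨u, rfl⟩ := (Finset.mem_filter.1 hy).2
        rw [Complex.mul_conj, G_unit χ hn u, map_mul]
        have : Complex.normSq (χ ((u⁻¹ : (Rq n q θ)ˣ) : Rq n q θ)) = 1 := by
          have := chi_unit_abs χ u⁻¹
          rw [← Complex.sq_norm, this, one_pow]
        rw [this, one_mul, ← Complex.sq_norm]
        push_cast
        ring
      rw [e1, e2, add_zero]
    -- m ≥ 1
    have hm1 : 0 < m := by
      rw [hm, Finset.card_pos]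
      exact ⟨1, Finset.mem_filter.2 ⟨Finset.mem_univ _, isUnit_one⟩⟩
    have heq : (m : ℂ) * ((‖G χ hn 1‖ : ℂ)) ^ 2 =
        (Fintype.card (Rq n q θ) : ℂ) * m := by rw [← hsplit, key]
    have heq' : (‖G χ hn 1‖) ^ 2 = (Fintype.card (Rq n q θ) : ℝ) := by
      have hmne : (m : ℂ) ≠ 0 := Nat.cast_ne_zero.2 hm1.ne'
      have := mul_left_cancel₀ hmne (heq.trans (mul_comm _ _))
      exact_mod_cast this
    exact heq'.le
  by_cases hy : IsUnit y
  · obtain ⟨u, rfl⟩ := hy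
    rw [G_unit χ hn u, norm_mul, chi_unit_abs χ u⁻¹, one_mul]
    rw [← Real.sqrt_sq (norm_nonneg _)]
    exact Real.sqrt_le_sqrt habs1
  · rw [G_nonunit χ hn hprim hy, norm_zero]
    exact Real.sqrt_nonneg _


/-- The truncated element with coefficient vector `z`. -/
noncomputable def elt (d : ℕ) (z : Fin d → ZMod q) : Rq n q θ :=
  ∑ i : Fin d, algebraMap (ZMod q) (Rq n q θ) (z i) * rootq n q θ ^ (i : ℕ)

/-- The frequency element associated to `t`. -/
noncomputable def yt (d : ℕ) (t : Fin (n - d) → ZMod q) : Rq n q θ :=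
  ∑ j : Fin (n - d), algebraMap (ZMod q) (Rq n q θ) (t j) * rootq n q θ ^ (n - 1 - (d + j))

lemma elt_eq_mk (d : ℕ) (z : Fin d → ZMod q) :
    elt d z = AdjoinRoot.mk (fp n q θ)
      (∑ i : Fin d, Polynomial.monomial (i : ℕ) (z i)) := by
  rw [elt, map_sum]
  refine Finset.sum_congr rfl fun i _ => ?_
  rw [← Polynomial.C_mul_X_pow_eq_monomial, map_mul, map_pow, AdjoinRoot.mk_X,
    AdjoinRoot.mk_C, ← AdjoinRoot.algebraMap_eq]
  rfl

lemma co_elt [Nontrivial (ZMod q)] (hn : n ≠ 0) (d : ℕ) (hd : d ≤ n) (z : Fin d → ZMod q)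
    (j : ℕ) :
    co hn (elt (n := n) (q := q) (θ := θ) d z) j = if h : j < d then z ⟨j, h⟩ else 0 := by
  have hP : (∑ i : Fin d, Polynomial.monomial (i : ℕ) (z i)).degree < (fp n q θ).degree := by
    rw [fp_degree (Nat.pos_of_ne_zero hn)]
    have hrw : (∑ i : Fin d, Polynomial.monomial (i : ℕ) (z i)) =
        ∑ i : Fin d, Polynomial.C (z i) * Polynomial.X ^ (i : ℕ) := by
      simp [Polynomial.C_mul_X_pow_eq_monomial]
    rw [hrw]
    exact lt_of_lt_of_le (Polynomial.degree_sum_fin_lt z) (by exact_mod_cast hd)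
  have h1 : mo (θ := θ) hn (elt d z) = ∑ i : Fin d, Polynomial.monomial (i : ℕ) (z i) := by
    rw [elt_eq_mk, mo_mk, (Polynomial.modByMonic_eq_self_iff (fp_monic hn)).2 hP]
  rw [co, h1, Polynomial.finset_sum_coeff]
  by_cases h : j < d
  · rw [dif_pos h, Finset.sum_eq_single (⟨j, h⟩ : Fin d)]
    · rw [Polynomial.coeff_monomial, if_pos rfl]
    · intro i _ hi
      rw [Polynomial.coeff_monomial, if_neg (fun hh => hi (Fin.ext hh))]
    · intro h'; exact absurd (Finset.mem_univ _) h'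
  · rw [dif_neg h]
    refine Finset.sum_eq_zero fun i _ => ?_
    rw [Polynomial.coeff_monomial, if_neg (fun hh => h (by rw [← hh]; exact i.isLt))]

lemma elt_co [Nontrivial (ZMod q)] (hn : n ≠ 0) (d : ℕ) (hd : d ≤ n) (x : Rq n q θ)
    (hx : ∀ j : ℕ, d ≤ j → co hn x j = 0) :
    elt d (fun i : Fin d => co hn x (i : ℕ)) = x := by
  apply mo_injective hn
  apply Polynomial.ext
  intro j
  change co hn (elt d (fun i : Fin d => co hn x (i : ℕ))) j = co hn x j
  rw [co_elt hn d hd]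
  by_cases h : j < d
  · rw [dif_pos h]
  · rw [dif_neg h, hx j (le_of_not_gt h)]

lemma T_yt_mul [Nontrivial (ZMod q)] (hn : n ≠ 0) (d : ℕ) (hd : d ≤ n)
    (t : Fin (n - d) → ZMod q) (x : Rq n q θ) :
    T hn (yt d t * x) = ∑ j : Fin (n - d), t j * co hn x (d + j) := by
  have h1 : yt d t * x = ∑ j : Fin (n - d), t j • (rootq n q θ ^ (n - 1 - (d + j)) * x) := by
    rw [yt, Finset.sum_mul]
    refine Finset.sum_congr rfl fun j _ => ?_
    rw [Algebra.smul_def, mul_assoc]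
  rw [h1, map_sum]
  refine Finset.sum_congr rfl fun j _ => ?_
  rw [map_smul, smul_eq_mul, T_rootpow hn x (Nat.sub_le _ _)]
  have hj : (j : ℕ) < n - d := j.isLt
  have hn1 : 1 ≤ n := Nat.pos_of_ne_zero hn
  have harith : n - 1 - (n - 1 - (d + (j : ℕ))) = d + (j : ℕ) := by omega
  rw [harith]

lemma sum_t [Nontrivial (ZMod q)] [NeZero q] (hn : n ≠ 0) (d : ℕ) (hd : d ≤ n)
    (x : Rq n q θ) :
    ∑ t : Fin (n - d) → ZMod q, psiR hn (yt d t * x) =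
      if (∀ j : Fin (n - d), co hn x (d + (j : ℕ)) = 0) then ((q : ℂ) ^ (n - d)) else 0 := by
  have step : ∀ t : Fin (n - d) → ZMod q, psiR hn (yt d t * x) =
      ∏ j : Fin (n - d), ZMod.stdAddChar (t j * co hn x (d + (j : ℕ))) := by
    intro t
    rw [psiR_apply, T_yt_mul hn d hd, addChar_map_sum]
  rw [Finset.sum_congr rfl fun t _ => step t]
  have swap := Finset.prod_univ_sum (fun _ : Fin (n - d) => (Finset.univ : Finset (ZMod q)))
    (fun j s => ZMod.stdAddChar (s * co hn x (d + (j : ℕ))))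
  rw [Fintype.piFinset_univ] at swap
  rw [← swap]
  have hfac : ∀ j : Fin (n - d), ∑ s : ZMod q, ZMod.stdAddChar (s * co hn x (d + (j : ℕ))) =
      if co hn x (d + (j : ℕ)) = 0 then (q : ℂ) else 0 := by
    intro j
    rw [AddChar.sum_mulShift _ (ZMod.isPrimitive_stdAddChar q), ZMod.card]
    split_ifs <;> simp
  rw [Finset.prod_congr rfl fun j _ => hfac j]
  by_cases hall : ∀ j : Fin (n - d), co hn x (d + (j : ℕ)) = 0
  · rw [if_pos hall, Finset.prod_congr rfl (fun j _ => if_pos (hall j)), Finset.prod_const,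
      Finset.card_univ, Fintype.card_fin]
  · rw [if_neg hall]
    obtain ⟨j0, hj0⟩ := not_forall.1 hall
    exact Finset.prod_eq_zero (Finset.mem_univ j0) (if_neg hj0)

lemma qk_mul_sum [Nontrivial (ZMod q)] [NeZero q] [Fintype (Rq n q θ)]
    [DecidableEq (Rq n q θ)] (χ : MulChar (Rq n q θ) ℂ) (hn : n ≠ 0) (d : ℕ) (hd : d ≤ n) :
    ((q : ℂ) ^ (n - d)) * ∑ z : Fin d → ZMod q, χ (elt d z) =
      ∑ t : Fin (n - d) → ZMod q, G χ hn (yt d t) := by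
  classical
  have rhs : ∑ t : Fin (n - d) → ZMod q, G χ hn (yt d t) =
      ∑ x : Rq n q θ, χ x * ∑ t : Fin (n - d) → ZMod q, psiR hn (yt d t * x) := by
    simp only [G]
    rw [Finset.sum_comm]
    exact Finset.sum_congr rfl fun x _ => (Finset.mul_sum _ _ _).symm
  rw [rhs]
  have hst : ∀ x : Rq n q θ, (∑ t : Fin (n - d) → ZMod q, psiR hn (yt d t * x)) =
      if (∀ j : Fin (n - d), co hn x (d + (j : ℕ)) = 0) then ((q : ℂ) ^ (n - d)) else 0 :=
    sum_t hn d hd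
  simp only [hst]
  have filt : ∑ x : Rq n q θ,
      (χ x * if (∀ j : Fin (n - d), co hn x (d + (j : ℕ)) = 0) then ((q : ℂ) ^ (n - d)) else 0)
      = ∑ x ∈ Finset.univ.filter
          (fun x : Rq n q θ => ∀ j : Fin (n - d), co hn x (d + (j : ℕ)) = 0),
          χ x * ((q : ℂ) ^ (n - d)) := by
    rw [Finset.sum_filter]
    exact Finset.sum_congr rfl fun x _ => by rw [mul_ite, mul_zero]
  rw [filt]
  have bij : ∑ x ∈ Finset.univ.filter
        (fun x : Rq n q θ => ∀ j : Fin (n - d), co hn x (d + (j : ℕ)) = 0),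
        χ x = ∑ z : Fin d → ZMod q, χ (elt d z) := by
    have hinv : ∀ x ∈ Finset.univ.filter
        (fun x : Rq n q θ => ∀ j : Fin (n - d), co hn x (d + (j : ℕ)) = 0),
        elt d (fun i : Fin d => co hn x (i : ℕ)) = x := by
      intro x hx
      refine elt_co hn d hd x fun j hj => ?_
      by_cases hjn : j < n
      · have := (Finset.mem_filter.1 hx).2 ⟨j - d, by omega⟩
        rwa [show d + (j - d) = j by omega] at this
      · exact co_eq_zero hn x (le_of_not_gt hjn)
    refine Finset.sum_nbij' (fun x => fun i : Fin d => co hn x (i : ℕ))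
      (fun z => elt d z) ?_ ?_ ?_ ?_ ?_
    · intro x hx
      exact Finset.mem_univ _
    · intro z _
      refine Finset.mem_filter.2 ⟨Finset.mem_univ _, fun j => ?_⟩
      rw [co_elt hn d hd, dif_neg (by omega)]
    · exact hinv
    · intro z _
      funext i
      show co hn (elt d z) (i : ℕ) = z i
      rw [co_elt hn d hd, dif_pos i.isLt]
    · intro x hx
      show χ x = χ (elt d (fun i : Fin d => co hn x (i : ℕ)))
      rw [hinv x hx]
  rw [← bij, Finset.mul_sum]
  exact Finset.sum_congr rfl fun x _ => mul_comm _ _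


lemma abs_sum_elt_le (χ : MulChar (Rq n q θ) ℂ) (hn : n ≠ 0)
    (hprim : ∀ I : Ideal (Rq n q θ), I ≠ ⊥ →
      ∃ u : (Rq n q θ)ˣ, ((u : Rq n q θ) - 1) ∈ I ∧ χ (u : Rq n q θ) ≠ 1)
    (d : ℕ) (hd : d ≤ n) :
    ‖∑ z : Fin d → ZMod q, χ (elt d z)‖ ≤
      Real.sqrt (Fintype.card (Rq n q θ)) := by
  classical
  have hq0 : (0 : ℝ) < (q : ℝ) := by
    exact_mod_cast Nat.pos_of_ne_zero (NeZero.ne q)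
  have key := congrArg (‖·‖) (qk_mul_sum χ hn d hd)
  rw [norm_mul, norm_pow, Complex.norm_natCast] at key
  have h2 : ‖∑ t : Fin (n - d) → ZMod q, G χ hn (yt d t)‖ ≤
      ((q : ℝ) ^ (n - d)) * Real.sqrt (Fintype.card (Rq n q θ)) := by
    refine le_trans (norm_sum_le _ _) ?_
    refine le_trans (Finset.sum_le_sum fun t _ => G_abs_le χ hn hprim (yt d t)) ?_
    rw [Finset.sum_const, Finset.card_univ, nsmul_eq_mul]
    have hcard : Fintype.card (Fin (n - d) → ZMod q) = q ^ (n - d) := by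
      rw [Fintype.card_fun, ZMod.card, Fintype.card_fin]
    rw [hcard]
    push_cast
    exact le_refl _
  rw [← key] at h2
  exact le_of_mul_le_mul_left h2 (pow_pos hq0 _)

lemma card_Rq [Nontrivial (ZMod q)] [NeZero q] [Fintype (Rq n q θ)] (hn : n ≠ 0) :
    Fintype.card (Rq n q θ) = q ^ n := by
  classical
  let b := AdjoinRoot.powerBasisAux' (fp_monic (θ := θ) (q := q) hn)
  rw [Fintype.card_congr b.equivFun.toEquiv, Fintype.card_fun, ZMod.card, Fintype.card_fin,
    fp_natDegree]

end Gauss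

end Stmt13


/-- **Character sum over truncated elements.**  Let `K = ℚ(θ^{1/n})` with `x^n - θ`
irreducible and `n > 2k`.  For a primitive multiplicative character `χ` of
`ℤ[θ^{1/n}]/qℤ[θ^{1/n}]`, the sum `S = ∑_{a ∈ [1,q]^{n-k}} χ(∑ aᵢ θ^{(i-1)/n})` satisfies
`|S| ≤ q^n / φ_K((q))^{1/2} ≤ q^{n/2+o(1)}`, and in particular `S = o(q^{n-k})` as
`q → ∞`. -/
theorem stmt_13 (n k : ℕ) (hk : 1 ≤ k) (hkn : 2 * k < n) (θ : ℤ)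
    (hirr : Irreducible ((Polynomial.X : Polynomial ℚ) ^ n - Polynomial.C (θ : ℚ))) :
    ∀ ε : ℝ, 0 < ε → ∃ Q : ℕ, ∀ q : ℕ, Q ≤ q →
      ∀ χ : MulChar (Rq n q θ) ℂ,
        (∀ I : Ideal (Rq n q θ), I ≠ ⊥ →
          ∃ u : (Rq n q θ)ˣ, ((u : Rq n q θ) - 1) ∈ I ∧ χ (u : Rq n q θ) ≠ 1) →
        ∀ S : ℂ, S = ∑ a ∈ Finset.Icc (1 : Fin (n - k) → ℕ) (fun _ => q),
            χ (∑ i, ((a i : Rq n q θ)) * (rootq n q θ) ^ (i : ℕ)) →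
          ‖S‖ ≤ (q : ℝ) ^ n / Real.sqrt (Nat.card (Rq n q θ)ˣ)
          ∧ ‖S‖ ≤ (q : ℝ) ^ ((n : ℝ) / 2 + ε)
          ∧ ‖S‖ ≤ ε * (q : ℝ) ^ (n - k) := by
  intro ε hε
  refine ⟨max 2 (⌈(ε⁻¹) ^ 2⌉₊ + 1), ?_⟩
  intro q hq χ hprim S hS
  classical
  have hq2 : 2 ≤ q := le_trans (le_max_left _ _) hq
  have hn : n ≠ 0 := by omega
  have hkn' : k ≤ n := by omega
  haveI : NeZero q := ⟨by omega⟩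
  haveI : Fact (1 < q) := ⟨by omega⟩
  letI : Fintype (Rq n q θ) :=
    Fintype.ofEquiv _
      (AdjoinRoot.powerBasisAux' (Stmt13.fp_monic (θ := θ) (q := q) hn)).equivFun.toEquiv.symm
  letI : DecidableEq (Rq n q θ) := Classical.decEq _
  -- reindex the sum
  set lf : ZMod q → ℕ := fun z => if z = 0 then q else z.val with hlf
  have hlf1 : ∀ z : ZMod q, ((lf z : ℕ) : ZMod q) = z := by
    intro z; by_cases h : z = 0
    · simp [hlf, h, ZMod.natCast_self]
    · simp [hlf, h, ZMod.natCast_zmod_val]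
  have hlf2 : ∀ z : ZMod q, 1 ≤ lf z ∧ lf z ≤ q := by
    intro z; by_cases h : z = 0
    · simp only [hlf, h, if_pos]; omega
    · have hv : z.val < q := ZMod.val_lt z
      have hv0 : z.val ≠ 0 := fun hh => h (by rwa [ZMod.val_eq_zero] at hh)
      simp only [hlf, h, if_neg, if_false]; omega
  have hlf3 : ∀ a : ℕ, 1 ≤ a → a ≤ q → lf ((a : ZMod q)) = a := by
    intro a h1 h2
    rcases eq_or_lt_of_le h2 with h | h
    · rw [h, ZMod.natCast_self]; simp [hlf, h]
    · have hval : ((a : ZMod q)).val = a := ZMod.val_natCast_of_lt h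
      have hne : (a : ZMod q) ≠ 0 := fun hh => by rw [hh, ZMod.val_zero] at hval; omega
      simp [hlf, hne, hval]
  have hSz : S = ∑ z : Fin (n - k) → ZMod q,
      χ (Stmt13.elt (n := n) (q := q) (θ := θ) (n - k) z) := by
    rw [hS]
    refine Finset.sum_nbij' (fun a => fun i : Fin (n - k) => ((a i : ℕ) : ZMod q))
      (fun z => fun i => lf (z i)) ?_ ?_ ?_ ?_ ?_
    · intro a _; exact Finset.mem_univ _
    · intro z _
      rw [Finset.mem_Icc]
      exact ⟨fun i => (hlf2 (z i)).1, fun i => (hlf2 (z i)).2⟩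
    · intro a ha
      rw [Finset.mem_Icc] at ha
      funext i
      show lf ((a i : ZMod q)) = a i
      exact hlf3 (a i) (ha.1 i) (ha.2 i)
    · intro z _
      funext i
      show ((lf (z i) : ℕ) : ZMod q) = z i
      exact hlf1 (z i)
    · intro a _
      show _ = χ (Stmt13.elt (n := n) (q := q) (θ := θ) (n - k)
        (fun i : Fin (n - k) => ((a i : ℕ) : ZMod q)))
      simp [Stmt13.elt]
  have hb := Stmt13.abs_sum_elt_le χ hn hprim (n - k) (Nat.sub_le n k)
  rw [← hSz, Stmt13.card_Rq hn] at hb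
  have hb' : ‖S‖ ≤ Real.sqrt ((q : ℝ) ^ n) := by
    have hc : ((q ^ n : ℕ) : ℝ) = (q : ℝ) ^ n := by push_cast; rfl
    rwa [hc] at hb
  have hq0 : (0 : ℝ) < (q : ℝ) := by positivity
  have hq1 : (1 : ℝ) ≤ (q : ℝ) := by exact_mod_cast (by omega : 1 ≤ q)
  -- unit counting
  have hu1 : 0 < Nat.card (Rq n q θ)ˣ := by
    rw [Nat.card_eq_fintype_card]
    exact Fintype.card_pos_iff.2 ⟨1⟩
  have hu2 : Nat.card (Rq n q θ)ˣ ≤ q ^ n := by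
    rw [Nat.card_eq_fintype_card, ← Stmt13.card_Rq (q := q) (θ := θ) hn]
    exact Fintype.card_le_of_injective Units.val (fun _ _ h => Units.ext h)
  have sqrt_pow : Real.sqrt ((q : ℝ) ^ n) = (q : ℝ) ^ ((n : ℝ) / 2) := by
    rw [show ((q : ℝ) ^ n) = (q : ℝ) ^ (n : ℝ) from (Real.rpow_natCast _ n).symm,
      Real.sqrt_eq_rpow, ← Real.rpow_mul hq0.le, mul_one_div]
  refine ⟨?_, ?_, ?_⟩
  · -- first bound
    have hs0 : 0 < Real.sqrt (Nat.card (Rq n q θ)ˣ) := Real.sqrt_pos.2 (by exact_mod_cast hu1)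
    have hs1 : Real.sqrt (Nat.card (Rq n q θ)ˣ) ≤ Real.sqrt ((q : ℝ) ^ n) :=
      Real.sqrt_le_sqrt (by exact_mod_cast hu2)
    calc ‖S‖ ≤ Real.sqrt ((q : ℝ) ^ n) := hb'
      _ = (q : ℝ) ^ n / Real.sqrt ((q : ℝ) ^ n) := (Real.div_sqrt).symm
      _ ≤ (q : ℝ) ^ n / Real.sqrt (Nat.card (Rq n q θ)ˣ) := by
          apply div_le_div_of_nonneg_left (by positivity) hs0 hs1
  · -- second bound
    calc ‖S‖ ≤ Real.sqrt ((q : ℝ) ^ n) := hb'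
      _ = (q : ℝ) ^ ((n : ℝ) / 2) := sqrt_pow
      _ ≤ (q : ℝ) ^ ((n : ℝ) / 2 + ε) :=
          Real.rpow_le_rpow_of_exponent_le hq1 (by linarith)
  · -- third bound
    have hqe : (ε⁻¹ : ℝ) ≤ Real.sqrt (q : ℝ) := by
      have h1 : ((ε⁻¹) ^ 2 : ℝ) ≤ (q : ℝ) := by
        have h2 : ((ε⁻¹) ^ 2 : ℝ) ≤ (⌈(ε⁻¹) ^ 2⌉₊ : ℝ) := Nat.le_ceil _
        have h3 : (⌈(ε⁻¹) ^ 2⌉₊ : ℕ) + 1 ≤ q := le_trans (le_max_right _ _) hq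
        have h4 : ((⌈(ε⁻¹) ^ 2⌉₊ : ℕ) : ℝ) + 1 ≤ (q : ℝ) := by exact_mod_cast h3
        linarith
      calc (ε⁻¹ : ℝ) = Real.sqrt ((ε⁻¹) ^ 2) := by
              rw [Real.sqrt_sq (by positivity)]
        _ ≤ Real.sqrt (q : ℝ) := Real.sqrt_le_sqrt h1
    have hcast : ((n - k : ℕ) : ℝ) = (n : ℝ) - (k : ℝ) := by
      rw [Nat.cast_sub hkn']
    have h3a : (n : ℝ) / 2 ≤ ((n - k : ℕ) : ℝ) - 1 / 2 := by
      rw [hcast]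
      have : (2 * k + 1 : ℕ) ≤ n := by omega
      have hcc : (2 * (k : ℝ) + 1) ≤ (n : ℝ) := by exact_mod_cast this
      linarith
    have hsq : (0 : ℝ) < Real.sqrt (q : ℝ) := Real.sqrt_pos.2 hq0
    have hpow0 : (0 : ℝ) < (q : ℝ) ^ (n - k) := by positivity
    calc ‖S‖ ≤ Real.sqrt ((q : ℝ) ^ n) := hb'
      _ = (q : ℝ) ^ ((n : ℝ) / 2) := sqrt_pow
      _ ≤ (q : ℝ) ^ (((n - k : ℕ) : ℝ) - 1 / 2) :=
          Real.rpow_le_rpow_of_exponent_le hq1 h3a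
      _ = (q : ℝ) ^ (n - k) / Real.sqrt (q : ℝ) := by
          rw [Real.rpow_sub hq0, Real.rpow_natCast, ← Real.sqrt_eq_rpow]
      _ ≤ ε * (q : ℝ) ^ (n - k) := by
          rw [div_le_iff₀ hsq]
          have h5 : 1 ≤ ε * Real.sqrt (q : ℝ) := by
            calc (1 : ℝ) = ε * ε⁻¹ := (mul_inv_cancel₀ hε.ne').symm
              _ ≤ ε * Real.sqrt (q : ℝ) := mul_le_mul_of_nonneg_left hqe hε.le
          nlinarith
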